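/- Suppose (x, s) ∈ ℝ^n_{>0} × ℝ^n_{>0} satisfy x_i s_i ≈_ε μ·τ_i for all i, where τ = σ(S^{-1/2-α}X^{1/2-α}A) + (d/n)·1 with α = 1/(4 log(4n/d)), ε ∈ [0, 1/80), and A ∈ ℝ^{n×d} non-degenerate. Then coordinatewise (1/2)·σ(S^{-1/2-α}X^{1/2-α}A) ≤ σ(S^{-1/2}X^{1/2}A) ≤ 2·σ(S^{-1/2-α}X^{1/2-α}A). -/

import Mathlib

open Matrix

lemma dual_bound {k : ℕ} {M : Matrix (Fin k) (Fin k) ℝ} (hM : M.PosDef)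
    (v y : Fin k → ℝ) :
    2 * (v ⬝ᵥ y) - y ⬝ᵥ (M *ᵥ y) ≤ v ⬝ᵥ (M⁻¹ *ᵥ v) := by
  have hdet : IsUnit M.det := isUnit_iff_ne_zero.2 (ne_of_gt hM.det_pos)
  have hsymm : Mᵀ = M := by
    have := hM.isHermitian; rwa [Matrix.IsHermitian, conjTranspose_eq_transpose_of_trivial] at this
  set u := M⁻¹ *ᵥ v with hu
  have hMu : M *ᵥ u = v := by rw [hu, mulVec_mulVec, mul_nonsing_inv _ hdet, one_mulVec]
  have h0 : 0 ≤ (y - u) ⬝ᵥ (M *ᵥ (y - u)) := by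
    have := hM.posSemidef.dotProduct_mulVec_nonneg (y - u)
    simpa using this
  have hsym : ∀ a b : Fin k → ℝ, a ⬝ᵥ (M *ᵥ b) = b ⬝ᵥ (M *ᵥ a) := by
    intro a b
    rw [dotProduct_mulVec, ← hsymm, vecMul_transpose, dotProduct_comm, hsymm]
  have hexp : (y - u) ⬝ᵥ (M *ᵥ (y - u)) = y ⬝ᵥ (M *ᵥ y) - 2 * (v ⬝ᵥ y) + v ⬝ᵥ u := by
    rw [mulVec_sub, dotProduct_sub, sub_dotProduct, sub_dotProduct, hMu]
    have h1 : u ⬝ᵥ (M *ᵥ y) = y ⬝ᵥ v := by rw [hsym, hMu]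
    have h2 : y ⬝ᵥ v = v ⬝ᵥ y := dotProduct_comm _ _
    have h3 : u ⬝ᵥ v = v ⬝ᵥ u := dotProduct_comm _ _
    linarith
  linarith [hexp ▸ h0]

lemma inv_quad_le {k : ℕ} {M N : Matrix (Fin k) (Fin k) ℝ} (hM : M.PosDef) (hN : N.PosDef)
    {c : ℝ} (hc : 0 < c) (h : ∀ v, v ⬝ᵥ (M *ᵥ v) ≤ c * (v ⬝ᵥ (N *ᵥ v))) (v : Fin k → ℝ) :
    v ⬝ᵥ (N⁻¹ *ᵥ v) ≤ c * (v ⬝ᵥ (M⁻¹ *ᵥ v)) := by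
  have hdet : IsUnit N.det := isUnit_iff_ne_zero.2 (ne_of_gt hN.det_pos)
  set y := N⁻¹ *ᵥ v with hy
  have hNy : N *ᵥ y = v := by rw [hy, mulVec_mulVec, mul_nonsing_inv _ hdet, one_mulVec]
  have key1 : v ⬝ᵥ (N⁻¹ *ᵥ v) = 2 * (v ⬝ᵥ y) - y ⬝ᵥ (N *ᵥ y) := by
    rw [hNy]
    have : y ⬝ᵥ v = v ⬝ᵥ y := dotProduct_comm _ _
    rw [← hy]; linarith
  have h2 := h y
  have h3 := dual_bound hM v (c⁻¹ • y)
  have e1 : v ⬝ᵥ (c⁻¹ • y) = c⁻¹ * (v ⬝ᵥ y) := by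
    rw [dotProduct_smul]; simp
  have e2 : (c⁻¹ • y) ⬝ᵥ (M *ᵥ (c⁻¹ • y)) = c⁻¹ * c⁻¹ * (y ⬝ᵥ (M *ᵥ y)) := by
    rw [mulVec_smul, dotProduct_smul, smul_dotProduct]; simp; ring
  rw [e1, e2] at h3
  have hc' : c ≠ 0 := ne_of_gt hc
  have h4 : 2 * (v ⬝ᵥ y) - c⁻¹ * (y ⬝ᵥ (M *ᵥ y)) ≤ c * (v ⬝ᵥ (M⁻¹ *ᵥ v)) := by
    have h6 := mul_le_mul_of_nonneg_left h3 (le_of_lt hc)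
    have e3 : c * (2 * (c⁻¹ * (v ⬝ᵥ y)) - c⁻¹ * c⁻¹ * (y ⬝ᵥ (M *ᵥ y)))
        = 2 * (v ⬝ᵥ y) - c⁻¹ * (y ⬝ᵥ (M *ᵥ y)) := by
      field_simp
    rw [e3] at h6
    exact h6
  have h5 : y ⬝ᵥ (N *ᵥ y) ≥ c⁻¹ * (y ⬝ᵥ (M *ᵥ y)) := by
    rw [ge_iff_le, inv_mul_le_iff₀ hc]
    linarith [h2]
  linarith [key1, h4, h5]

lemma inj_of_rank {n d : ℕ} (B : Matrix (Fin n) (Fin d) ℝ) (hB : B.rank = d) :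
    Function.Injective B.mulVec := by
  have h1 := LinearMap.finrank_range_add_finrank_ker B.mulVecLin
  have h2 : Module.finrank ℝ (Fin d → ℝ) = d := Module.finrank_fin_fun ℝ
  rw [h2] at h1
  have h3 : Module.finrank ℝ (LinearMap.range B.mulVecLin) = d := hB
  have h4 : Module.finrank ℝ (LinearMap.ker B.mulVecLin) = 0 := by omega
  have h5 : LinearMap.ker B.mulVecLin = ⊥ := Submodule.finrank_eq_zero.mp h4
  exact LinearMap.ker_eq_bot.mp h5

lemma posdef_tmul {n d : ℕ} (B : Matrix (Fin n) (Fin d) ℝ)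
    (hB : Function.Injective B.mulVec) : (Bᵀ * B).PosDef := by
  refine Matrix.PosDef.of_dotProduct_mulVec_pos ?_ ?_
  · simpa [conjTranspose_eq_transpose_of_trivial] using isHermitian_conjTranspose_mul_self B
  · intro v hv
    have hBv : B *ᵥ v ≠ 0 := by
      intro h
      exact hv (hB (by simpa [Matrix.mulVec_zero] using h))
    have e : star v ⬝ᵥ ((Bᵀ * B) *ᵥ v) = (B *ᵥ v) ⬝ᵥ (B *ᵥ v) := by
      rw [star_trivial, ← mulVec_mulVec, dotProduct_mulVec, vecMul_transpose]
    rw [e]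
    have h1 : 0 ≤ (B *ᵥ v) ⬝ᵥ (B *ᵥ v) := Finset.sum_nonneg fun j _ => mul_self_nonneg _
    rcases h1.lt_or_eq with h | h
    · exact h
    · exact absurd ((dotProduct_self_eq_zero).mp h.symm) hBv

lemma rank_row_scale {n d : ℕ} (A : Matrix (Fin n) (Fin d) ℝ) (e : Fin n → ℝ)
    (he : ∀ i, e i ≠ 0) :
    (Matrix.of fun i j => e i * A i j).rank = A.rank := by
  have h : (Matrix.of fun i j => e i * A i j) = diagonal e * A := by
    ext i j
    simp [Matrix.diagonal_mul]
  rw [h]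
  exact Matrix.rank_mul_eq_right_of_isUnit_det _ _
    (by rw [det_diagonal]; exact isUnit_iff_ne_zero.2 (Finset.prod_ne_zero_iff.2 fun i _ => he i))

lemma quad_eq {n d : ℕ} (B : Matrix (Fin n) (Fin d) ℝ) (v : Fin d → ℝ) :
    v ⬝ᵥ ((Bᵀ * B) *ᵥ v) = ∑ i, ((B *ᵥ v) i)^2 := by
  rw [← mulVec_mulVec, dotProduct_mulVec, vecMul_transpose]
  simp [dotProduct, sq]

lemma ratio_bound (n d : ℕ) (hd : 0 < d) (hdn : d ≤ n) (ε : ℝ) (hε0 : 0 ≤ ε) (hε : ε < 1/80) :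
    (2 * Real.exp (2*ε) * n / d) ^ (2 * (1 / (4 * Real.log (4 * (n:ℝ) / d)))) ≤ 2 := by
  have hd' : (0:ℝ) < d := by exact_mod_cast hd
  have hn' : (0:ℝ) < n := lt_of_lt_of_le hd' (by exact_mod_cast hdn)
  have hnd : (1:ℝ) ≤ (n:ℝ)/d := (one_le_div hd').mpr (by exact_mod_cast hdn)
  have hnd0 : (0:ℝ) < (n:ℝ)/d := by linarith
  have h4 : (4:ℝ) ≤ 4*(n:ℝ)/d := by rw [mul_div_assoc]; linarith
  set T := Real.log (4*(n:ℝ)/d) with hTdef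
  have hT : 0 < T := Real.log_pos (by linarith)
  have hl4 : Real.log 4 = 2 * Real.log 2 := by
    rw [show (4:ℝ) = 2^2 by norm_num, Real.log_pow]; push_cast; ring
  have hTeq : T = 2 * Real.log 2 + Real.log ((n:ℝ)/d) := by
    rw [hTdef, mul_div_assoc, Real.log_mul (by norm_num) (ne_of_gt hnd0), hl4]
  have ha : (0:ℝ) < 2 * Real.exp (2*ε) * n / d := by positivity
  have hla : Real.log (2 * Real.exp (2*ε) * n / d)
      = Real.log 2 + 2*ε + Real.log ((n:ℝ)/d) := by
    rw [mul_div_assoc, Real.log_mul (by positivity) (ne_of_gt hnd0),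
      Real.log_mul (by norm_num) (ne_of_gt (Real.exp_pos _)), Real.log_exp]
  have hlog2 : (0.6931:ℝ) < Real.log 2 := by
    have := Real.log_two_gt_d9; linarith
  have key : Real.log 2 + 2*ε + Real.log ((n:ℝ)/d) ≤ Real.log 2 * (2*T) := by
    have hlnd : Real.log ((n:ℝ)/d) = T - 2 * Real.log 2 := by linarith
    rw [hlnd]
    nlinarith [mul_nonneg hT.le (by linarith : (0:ℝ) ≤ 2*Real.log 2 - 1)]
  rw [Real.rpow_def_of_pos ha]
  conv_rhs => rw [← Real.exp_log (show (0:ℝ) < 2 by norm_num)]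
  rw [Real.exp_le_exp, hla]
  have hTne : T ≠ 0 := ne_of_gt hT
  have e : (Real.log 2 + 2*ε + Real.log ((n:ℝ)/d)) * (2 * (1 / (4*T)))
      = (Real.log 2 + 2*ε + Real.log ((n:ℝ)/d)) / (2*T) := by field_simp; ring
  rw [e, div_le_iff₀ (by linarith : (0:ℝ) < 2*T)]
  exact key

/-- Leverage scores of a matrix `B`: the diagonal of `B(BᵀB)⁻¹Bᵀ`. -/
noncomputable def lev {n d : ℕ} (B : Matrix (Fin n) (Fin d) ℝ) (i : Fin n) : ℝ :=
  (B * (Bᵀ * B)⁻¹ * Bᵀ) i i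

lemma lev_eq_dot {n d : ℕ} (B : Matrix (Fin n) (Fin d) ℝ) (i : Fin n) :
    lev B i = (fun j => B i j) ⬝ᵥ ((Bᵀ * B)⁻¹ *ᵥ fun j => B i j) := by
  simp only [lev, Matrix.mul_apply, Matrix.mulVec, dotProduct, transpose_apply,
    Finset.sum_mul, Finset.mul_sum]
  rw [Finset.sum_comm]
  congr 1; ext k; congr 1; ext l; ring

lemma lev_bounds {n d : ℕ} (B : Matrix (Fin n) (Fin d) ℝ)
    (hdet : IsUnit (Bᵀ * B).det) (i : Fin n) : 0 ≤ lev B i ∧ lev B i ≤ 1 := by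
  set M := Bᵀ * B with hM
  set P := B * M⁻¹ * Bᵀ with hP
  have hMt : Mᵀ = M := by rw [hM, transpose_mul, transpose_transpose]
  have hPP : P * P = P := by
    have h1 : M⁻¹ * M = 1 := nonsing_inv_mul _ hdet
    have : P * P = B * (M⁻¹ * M) * (M⁻¹ * Bᵀ) := by
      simp only [hP, hM, Matrix.mul_assoc]
    rw [h1, Matrix.mul_one] at this
    rw [this, hP, Matrix.mul_assoc]
  have hPt : Pᵀ = P := by
    rw [hP, transpose_mul, transpose_mul, transpose_transpose, transpose_nonsing_inv, hMt,
      Matrix.mul_assoc]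
  have key : P i i = ∑ j, (P i j) ^ 2 := by
    conv_lhs => rw [← hPP]
    rw [Matrix.mul_apply]
    congr 1; ext j
    have : P j i = P i j := by
      calc P j i = Pᵀ i j := (transpose_apply P i j).symm
        _ = P i j := by rw [hPt]
    rw [this]; ring
  have h1 : (P i i) ^ 2 ≤ P i i := by
    have hs := Finset.single_le_sum (f := fun j => (P i j)^2) (fun j _ => sq_nonneg _)
      (Finset.mem_univ i)
    rw [← key] at hs
    exact hs
  have : lev B i = P i i := rfl
  rw [this]
  constructor <;> nlinarith [h1]

/-- For `(μ,ε)`-centered points, the leverage scores of `S^{-1/2}X^{1/2}A` are within a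
factor `2` of those of `S^{-1/2-α}X^{1/2-α}A`, where `α = 1/(4 log(4n/d))`. -/
theorem stmt15 (n d : ℕ) (hd : 0 < d) (hdn : d ≤ n)
    (A : Matrix (Fin n) (Fin d) ℝ) (hA : A.rank = d) (hrows : ∀ i, ∃ j, A i j ≠ 0)
    (x s : Fin n → ℝ) (hx : ∀ i, 0 < x i) (hs : ∀ i, 0 < s i)
    (μ ε : ℝ) (hμ : 0 < μ) (hε0 : 0 ≤ ε) (hε : ε < 1/80)
    (hcenter : ∀ i,
      Real.exp (-ε) * (μ * (lev (Matrix.of fun i' j =>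
          s i' ^ (-(1/2 : ℝ) - 1 / (4 * Real.log (4 * n / d))) *
            x i' ^ ((1/2 : ℝ) - 1 / (4 * Real.log (4 * n / d))) * A i' j) i + (d : ℝ) / n)) ≤
        x i * s i ∧
      x i * s i ≤
        Real.exp ε * (μ * (lev (Matrix.of fun i' j =>
          s i' ^ (-(1/2 : ℝ) - 1 / (4 * Real.log (4 * n / d))) *
            x i' ^ ((1/2 : ℝ) - 1 / (4 * Real.log (4 * n / d))) * A i' j) i + (d : ℝ) / n))) :
    ∀ i,
      (1/2) * lev (Matrix.of fun i' j =>
          s i' ^ (-(1/2 : ℝ) - 1 / (4 * Real.log (4 * n / d))) *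
            x i' ^ ((1/2 : ℝ) - 1 / (4 * Real.log (4 * n / d))) * A i' j) i ≤
        lev (Matrix.of fun i' j => s i' ^ (-(1/2 : ℝ)) * x i' ^ ((1/2 : ℝ)) * A i' j) i ∧
      lev (Matrix.of fun i' j => s i' ^ (-(1/2 : ℝ)) * x i' ^ ((1/2 : ℝ)) * A i' j) i ≤
        2 * lev (Matrix.of fun i' j =>
          s i' ^ (-(1/2 : ℝ) - 1 / (4 * Real.log (4 * n / d))) *
            x i' ^ ((1/2 : ℝ) - 1 / (4 * Real.log (4 * n / d))) * A i' j) i := by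
  have hd' : (0:ℝ) < d := by exact_mod_cast hd
  have hn0 : 0 < n := lt_of_lt_of_le hd hdn
  have hn' : (0:ℝ) < n := by exact_mod_cast hn0
  have hnd1 : (1:ℝ) ≤ (n:ℝ)/d := (one_le_div hd').mpr (by exact_mod_cast hdn)
  set αx : ℝ := 1 / (4 * Real.log (4 * (n:ℝ) / (d:ℝ))) with hαdef
  have hT : 0 < Real.log (4 * (n:ℝ) / (d:ℝ)) := Real.log_pos (by rw [mul_div_assoc]; linarith)
  have hα : 0 < αx := by rw [hαdef]; exact div_pos one_pos (by linarith)
  set B0 := Matrix.of fun (i' : Fin n) (j : Fin d) =>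
    s i' ^ (-(1/2 : ℝ) - αx) * x i' ^ ((1/2 : ℝ) - αx) * A i' j with hB0def
  set B1 := Matrix.of fun (i' : Fin n) (j : Fin d) =>
    s i' ^ (-(1/2 : ℝ)) * x i' ^ ((1/2 : ℝ)) * A i' j with hB1def
  set c : Fin n → ℝ := fun i' => (x i' * s i') ^ αx with hcdef
  have hcpos : ∀ i', 0 < c i' := fun i' => Real.rpow_pos_of_pos (mul_pos (hx i') (hs i')) _
  have hrow : ∀ i' j, B1 i' j = c i' * B0 i' j := by
    intro i' j
    have e1 : s i' ^ (-(1/2:ℝ)) = s i' ^ αx * s i' ^ (-(1/2:ℝ) - αx) := by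
      rw [← Real.rpow_add (hs i')]; congr 1; ring
    have e2 : x i' ^ ((1/2:ℝ)) = x i' ^ αx * x i' ^ ((1/2:ℝ) - αx) := by
      rw [← Real.rpow_add (hx i')]; congr 1; ring
    have e3 : c i' = x i' ^ αx * s i' ^ αx := Real.mul_rpow (hx i').le (hs i').le
    show s i' ^ (-(1/2:ℝ)) * x i' ^ ((1/2:ℝ)) * A i' j = c i' *
      (s i' ^ (-(1/2:ℝ) - αx) * x i' ^ ((1/2:ℝ) - αx) * A i' j)
    rw [e1, e2, e3]; ring
  have hrank0 : B0.rank = d := by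
    have := rank_row_scale A (fun i' => s i' ^ (-(1/2:ℝ) - αx) * x i' ^ ((1/2:ℝ) - αx))
      (fun i' => ne_of_gt (mul_pos (Real.rpow_pos_of_pos (hs i') _)
        (Real.rpow_pos_of_pos (hx i') _)))
    rw [hA] at this; exact this
  have hrank1 : B1.rank = d := by
    have := rank_row_scale A (fun i' => s i' ^ (-(1/2:ℝ)) * x i' ^ ((1/2:ℝ)))
      (fun i' => ne_of_gt (mul_pos (Real.rpow_pos_of_pos (hs i') _)
        (Real.rpow_pos_of_pos (hx i') _)))
    rw [hA] at this; exact this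
  have hPD0 : (B0ᵀ * B0).PosDef := posdef_tmul B0 (inj_of_rank B0 hrank0)
  have hPD1 : (B1ᵀ * B1).PosDef := posdef_tmul B1 (inj_of_rank B1 hrank1)
  have hdet0 : IsUnit (B0ᵀ * B0).det := isUnit_iff_ne_zero.2 (ne_of_gt hPD0.det_pos)
  have hlev0 : ∀ i', 0 ≤ lev B0 i' ∧ lev B0 i' ≤ 1 := fun i' => lev_bounds B0 hdet0 i'
  set lo := Real.exp (-ε) * μ * ((d:ℝ)/n) with hlodef
  set hi := 2 * Real.exp ε * μ with hhidef
  have hlo : 0 < lo := by rw [hlodef]; positivity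
  have hhi0 : 0 < hi := by rw [hhidef]; positivity
  have hxs : ∀ i', lo ≤ x i' * s i' ∧ x i' * s i' ≤ hi := by
    intro i'
    obtain ⟨h1, h2⟩ := hcenter i'
    obtain ⟨hl0, hl1⟩ := hlev0 i'
    constructor
    · calc lo = Real.exp (-ε) * (μ * ((d:ℝ)/n)) := by rw [hlodef]; ring
        _ ≤ Real.exp (-ε) * (μ * (lev B0 i' + (d:ℝ)/n)) := by
            apply mul_le_mul_of_nonneg_left _ (Real.exp_pos _).le
            apply mul_le_mul_of_nonneg_left _ hμ.le
            linarith
        _ ≤ x i' * s i' := h1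
    · have hdn1 : (d:ℝ)/n ≤ 1 := by rw [div_le_one hn']; exact_mod_cast hdn
      calc x i' * s i' ≤ Real.exp ε * (μ * (lev B0 i' + (d:ℝ)/n)) := h2
        _ ≤ Real.exp ε * (μ * 2) := by
            apply mul_le_mul_of_nonneg_left _ (Real.exp_pos _).le
            apply mul_le_mul_of_nonneg_left _ hμ.le
            linarith
        _ = hi := by rw [hhidef]; ring
  set lo2 := lo ^ (2*αx) with hlo2def
  set hi2 := hi ^ (2*αx) with hhi2def
  have hlo2 : 0 < lo2 := Real.rpow_pos_of_pos hlo _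
  have hhi2 : 0 < hi2 := Real.rpow_pos_of_pos hhi0 _
  have hc2 : ∀ i', (c i')^2 = (x i' * s i') ^ (2*αx) := by
    intro i'
    rw [sq, ← Real.rpow_add (mul_pos (hx i') (hs i'))]
    congr 1; ring
  have hc2lo : ∀ i', lo2 ≤ (c i')^2 := fun i' => by
    rw [hc2, hlo2def]
    exact Real.rpow_le_rpow hlo.le (hxs i').1 (by linarith)
  have hc2hi : ∀ i', (c i')^2 ≤ hi2 := fun i' => by
    rw [hc2, hhi2def]
    exact Real.rpow_le_rpow (mul_pos (hx i') (hs i')).le (hxs i').2 (by linarith)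
  have hmv : ∀ v (i' : Fin n), (B1 *ᵥ v) i' = c i' * ((B0 *ᵥ v) i') := by
    intro v i'
    simp only [mulVec, dotProduct, Finset.mul_sum]
    apply Finset.sum_congr rfl
    intro j _
    rw [hrow i' j]; ring
  have h_up : ∀ v, v ⬝ᵥ ((B1ᵀ * B1) *ᵥ v) ≤ hi2 * (v ⬝ᵥ ((B0ᵀ * B0) *ᵥ v)) := by
    intro v
    rw [quad_eq, quad_eq, Finset.mul_sum]
    apply Finset.sum_le_sum
    intro i' _
    rw [hmv v i', mul_pow]
    exact mul_le_mul_of_nonneg_right (hc2hi i') (sq_nonneg _)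
  have h_lo : ∀ v, v ⬝ᵥ ((B0ᵀ * B0) *ᵥ v) ≤ lo2⁻¹ * (v ⬝ᵥ ((B1ᵀ * B1) *ᵥ v)) := by
    intro v
    have h1 : lo2 * (v ⬝ᵥ ((B0ᵀ * B0) *ᵥ v)) ≤ v ⬝ᵥ ((B1ᵀ * B1) *ᵥ v) := by
      rw [quad_eq, quad_eq, Finset.mul_sum]
      apply Finset.sum_le_sum
      intro i' _
      rw [hmv v i', mul_pow]
      exact mul_le_mul_of_nonneg_right (hc2lo i') (sq_nonneg _)
    calc v ⬝ᵥ ((B0ᵀ * B0) *ᵥ v) = lo2⁻¹ * (lo2 * (v ⬝ᵥ ((B0ᵀ * B0) *ᵥ v))) := by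
          field_simp
      _ ≤ lo2⁻¹ * (v ⬝ᵥ ((B1ᵀ * B1) *ᵥ v)) :=
          mul_le_mul_of_nonneg_left h1 (inv_pos.2 hlo2).le
  have hdiv : hi / lo = 2 * Real.exp (2*ε) * n / d := by
    rw [hhidef, hlodef, show (2:ℝ)*ε = ε + ε by ring, Real.exp_add]
    rw [show Real.exp (-ε) = (Real.exp ε)⁻¹ by rw [Real.exp_neg]]
    field_simp
  have hratio : hi2 ≤ 2 * lo2 := by
    have h1 := ratio_bound n d hd hdn ε hε0 hε
    rw [← hαdef] at h1
    rw [← hdiv] at h1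
    rw [Real.div_rpow hhi0.le hlo.le] at h1
    rw [hlo2def, hhi2def]
    exact (div_le_iff₀ hlo2).mp h1
  intro i
  have hinv1 := inv_quad_le hPD0 hPD1 (inv_pos.2 hlo2) h_lo (fun j => B0 i j)
  have hinv2 := inv_quad_le hPD1 hPD0 hhi2 h_up (fun j => B0 i j)
  have hr0 : 0 ≤ (fun j => B0 i j) ⬝ᵥ ((B0ᵀ * B0)⁻¹ *ᵥ fun j => B0 i j) := by
    simpa using (hPD0.inv).posSemidef.dotProduct_mulVec_nonneg (fun j => B0 i j)
  have ht0 : 0 ≤ (fun j => B0 i j) ⬝ᵥ ((B1ᵀ * B1)⁻¹ *ᵥ fun j => B0 i j) := by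
    simpa using (hPD1.inv).posSemidef.dotProduct_mulVec_nonneg (fun j => B0 i j)
  have hlev0i : lev B0 i = (fun j => B0 i j) ⬝ᵥ ((B0ᵀ * B0)⁻¹ *ᵥ fun j => B0 i j) :=
    lev_eq_dot B0 i
  have hlev1i : lev B1 i
      = (c i)^2 * ((fun j => B0 i j) ⬝ᵥ ((B1ᵀ * B1)⁻¹ *ᵥ fun j => B0 i j)) := by
    rw [lev_eq_dot B1 i]
    have hq1 : (fun j => B1 i j) = c i • (fun j => B0 i j) := by
      funext j; rw [hrow i j]; rfl
    rw [hq1, smul_dotProduct, mulVec_smul, dotProduct_smul]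
    simp only [smul_eq_mul]; ring
  set r := (fun j => B0 i j) ⬝ᵥ ((B0ᵀ * B0)⁻¹ *ᵥ fun j => B0 i j) with hrdef
  set t := (fun j => B0 i j) ⬝ᵥ ((B1ᵀ * B1)⁻¹ *ᵥ fun j => B0 i j) with htdef
  constructor
  · rw [hlev0i, hlev1i]
    have e1 : hi2 * t ≤ 2 * lo2 * t := mul_le_mul_of_nonneg_right hratio ht0
    have e2 : lo2 * t ≤ (c i)^2 * t := mul_le_mul_of_nonneg_right (hc2lo i) ht0
    linarith
  · rw [hlev0i, hlev1i]
    have e1 : (c i)^2 * t ≤ hi2 * t := mul_le_mul_of_nonneg_right (hc2hi i) ht0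
    have e2 : hi2 * t ≤ hi2 * (lo2⁻¹ * r) := mul_le_mul_of_nonneg_left hinv1 hhi2.le
    have e3 : hi2 * lo2⁻¹ ≤ 2 := by
      have h : hi2 / lo2 ≤ 2 := (div_le_iff₀ hlo2).mpr (by linarith)
      rwa [div_eq_mul_inv] at h
    have e5 : (hi2 * lo2⁻¹) * r ≤ 2 * r := mul_le_mul_of_nonneg_right e3 hr0
    nlinarith
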